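/- arXiv:1008.0631 — 2 statements merged into one kernel-verified Lean document; each statement's English description precedes it below -/
import Mathlib

section
/- Let 0 → A_k → F_k → F_{k+1} → 0 (k = 0,…,m−1) be a sequence of short exact sequences of chain complexes of finitely generated free ℤ-modules with F_0 = C, such that each H_*(A_k) is torsion-free and each induced map H_*(A_k) → H_*(F_k) is one-free. If H_*(C) is torsion-free, then H_*(F_k) is torsion-free for all k = 0,…,m. -/
open CategoryTheory HomologicalComplex


lemma step_torsionFree
    {S : ShortComplex (HomologicalComplex (ModuleCat ℤ) (ComplexShape.down ℕ))}
    (hS : S.ShortExact)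
    (hHA : ∀ n, NoZeroSMulDivisors ℤ (S.X₁.homology n))
    (honefree : ∀ (n : ℕ) (p : ℤ) (y : S.X₂.homology n), p ≠ 0 →
      p • y ∈ Set.range (homologyMap S.f n) → y ∈ Set.range (homologyMap S.f n))
    (n : ℕ) : NoZeroSMulDivisors ℤ (S.X₃.homology n) := by
  constructor
  intro p y hpy
  by_contra hcon
  push_neg at hcon
  obtain ⟨hp, hy⟩ := hcon
  apply hy
  -- first: y is in the range of homologyMap S.g n
  have hrange : ∃ x : S.X₂.homology n, homologyMap S.g n x = y := by
    match n with
    | 0 =>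
      have : Epi (S.g.f 0) := (hS.map_of_exact (eval _ _ 0)).epi_g
      have : Epi (homologyMap S.g 0) :=
        epi_homologyMap_of_epi_of_not_rel S.g 0 (by intro j; simp [ComplexShape.down_Rel])
      exact (ModuleCat.epi_iff_surjective _).1 this y
    | (m+1) =>
      have hrel : (ComplexShape.down ℕ).Rel (m+1) m := by simp [ComplexShape.down_Rel]
      have hδ : hS.δ (m+1) m hrel y = 0 := by
        have h1 : p • (hS.δ (m+1) m hrel y) = 0 := by
          rw [← map_zsmul, hpy, map_zero]
        rcases (NoZeroSMulDivisors.eq_zero_or_eq_zero_of_smul_eq_zero h1) with h | h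
        · exact absurd h hp
        · exact h
      have := (hS.homology_exact₃ (m+1) m hrel)
      rw [ShortComplex.moduleCat_exact_iff] at this
      exact this y hδ
  obtain ⟨x, hx⟩ := hrange
  have hgx : homologyMap S.g n (p • x) = 0 := by rw [map_zsmul, hx, hpy]
  have hex2 := hS.homology_exact₂ n
  rw [ShortComplex.moduleCat_exact_iff] at hex2
  have hmem : p • x ∈ Set.range (homologyMap S.f n) := by
    obtain ⟨a, ha⟩ := hex2 (p • x) hgx
    exact ⟨a, ha⟩
  obtain ⟨a, ha⟩ := honefree n p x hp hmem
  have hz : homologyMap S.f n ≫ homologyMap S.g n = 0 := by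
    rw [← homologyMap_comp, S.zero, homologyMap_zero]
  rw [← hx, ← ha]
  exact congrArg (fun (φ : S.X₁.homology n ⟶ S.X₃.homology n) => φ a) hz

/-- Filtration argument: given short exact sequences `0 → A_k → F_k → F_{k+1} → 0`
(`k = 0,…,m−1`) of chain complexes of finitely generated free ℤ-modules with each
`H_*(A_k)` torsion free, each induced map `H_*(A_k) → H_*(F_k)` one-free, and
`H_*(F 0)` torsion free, all the homologies `H_*(F_k)` are torsion free. -/
theorem torsionFree_homology_of_filtration
    (m : ℕ)
    (F : Fin (m + 1) → ChainComplex (ModuleCat ℤ) ℕ)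
    (A : Fin m → ChainComplex (ModuleCat ℤ) ℕ)
    (i : ∀ k : Fin m, A k ⟶ F k.castSucc)
    (j : ∀ k : Fin m, F k.castSucc ⟶ F k.succ)
    (hfF : ∀ (k : Fin (m + 1)) (n : ℕ), Module.Free ℤ ((F k).X n))
    (hgF : ∀ (k : Fin (m + 1)) (n : ℕ), Module.Finite ℤ ((F k).X n))
    (hfA : ∀ (k : Fin m) (n : ℕ), Module.Free ℤ ((A k).X n))
    (hgA : ∀ (k : Fin m) (n : ℕ), Module.Finite ℤ ((A k).X n))
    (hinj : ∀ (k : Fin m) (n : ℕ), Function.Injective ((i k).f n))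
    (hsurj : ∀ (k : Fin m) (n : ℕ), Function.Surjective ((j k).f n))
    (hexact : ∀ (k : Fin m) (n : ℕ), Function.Exact ((i k).f n) ((j k).f n))
    (hHA : ∀ (k : Fin m) (n : ℕ), NoZeroSMulDivisors ℤ ((A k).homology n))
    (honefree : ∀ (k : Fin m) (n : ℕ) (p : ℤ) (y : (F k.castSucc).homology n), p ≠ 0 →
      p • y ∈ Set.range (homologyMap (i k) n) → y ∈ Set.range (homologyMap (i k) n))
    (hH0 : ∀ n, NoZeroSMulDivisors ℤ ((F 0).homology n)) :
    ∀ (k : Fin (m + 1)) (n : ℕ), NoZeroSMulDivisors ℤ ((F k).homology n) := by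
  intro k
  induction k using Fin.induction with
  | zero => exact hH0
  | succ k ih =>
    have w : i k ≫ j k = 0 := by
      ext n x
      exact (hexact k n).apply_apply_eq_zero x
    let S : ShortComplex (HomologicalComplex (ModuleCat ℤ) (ComplexShape.down ℕ)) :=
      ShortComplex.mk (i k) (j k) w
    have hS : S.ShortExact := by
      apply HomologicalComplex.shortExact_of_degreewise_shortExact
      intro n
      exact
        { exact := (ShortComplex.ShortExact.moduleCat_exact_iff_function_exact _).2 (hexact k n)
          mono_f := (ModuleCat.mono_iff_injective _).2 (hinj k n)
          epi_g := (ModuleCat.epi_iff_surjective _).2 (hsurj k n) }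
    exact step_torsionFree hS (hHA k) (honefree k)
end

section
/- Let ∂ be the boundary operator on the Salvetti complex of a finite Coxeter system (W,S), defined on a k-cell E(w,Γ) (w ∈ W, Γ ⊆ S, |Γ| = k) by ∂(E(w,Γ)) = Σ_{s_j∈Γ} Σ_{β ∈ W_Γ^{Γ∖{s_j}}} (−1)^{ℓ(β)+μ(Γ,s_j)} E(wβ, Γ∖{s_j}), where μ(Γ,s_j) = #{s_i ∈ Γ : i ≤ j}. Then ∂ ∘ ∂ = 0. -/
open scoped Classical

noncomputable section

namespace SalvettiStmt17

section Aux

open CoxeterSystem List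

variable {B : Type*} {W : Type*} [Group W] {M : CoxeterMatrix B} (cs : CoxeterSystem M W)

local prefix:100 "s" => cs.simple
local prefix:100 "π" => cs.wordProd
local prefix:100 "ℓ" => cs.length
local prefix:100 "ris" => cs.rightInvSeq

theorem conj_conj (i : B) (t : W) : s i * (s i * t * s i) * s i = t := by
  calc s i * (s i * t * s i) * s i = (s i * (s i * (t * s i))) * s i := by group
    _ = (t * s i) * s i := by rw [cs.simple_mul_simple_cancel_left]
    _ = t := cs.simple_mul_simple_cancel_right i

theorem conj_eq_simple_iff (i : B) (t : W) : (s i * t * s i = s i) ↔ (t = s i) := by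
  constructor
  · intro h'
    have h2 := congrArg (fun x => s i * x * s i) h'
    rw [conj_conj] at h2
    rw [h2, cs.simple_mul_simple_cancel_right]
  · rintro rfl
    rw [cs.simple_mul_simple_cancel_right]

/-- The basic involution of the sign representation on `W × ℤˣ`. -/
def sigmaFun (i : B) : W × ℤˣ → W × ℤˣ :=
  fun p => (s i * p.1 * s i, (if p.1 = s i then -1 else 1) * p.2)

theorem sigmaFun_involutive (i : B) : Function.Involutive (sigmaFun cs i) := by
  intro ⟨t, ε⟩
  simp only [sigmaFun]
  rw [Prod.mk.injEq]
  refine ⟨conj_conj cs i t, ?_⟩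
  by_cases ht : t = s i
  · rw [if_pos ht]; change (if s i * t * s i = s i then (-1 : ℤˣ) else 1) * (-1 * ε) = ε
    rw [if_pos ((conj_eq_simple_iff cs i t).mpr ht)]
    simp
  · rw [if_neg ht]; change (if s i * t * s i = s i then (-1 : ℤˣ) else 1) * (1 * ε) = ε
    rw [if_neg (fun h => ht ((conj_eq_simple_iff cs i t).mp h))]
    simp

/-- The sign involution as a permutation. -/
def sigma (i : B) : Equiv.Perm (W × ℤˣ) := (sigmaFun_involutive cs i).toPerm

theorem sigma_apply (i : B) (t : W) (ε : ℤˣ) :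
    sigma cs i (t, ε) = (s i * t * s i, (if t = s i then -1 else 1) * ε) := rfl

theorem prod_map_sigma_apply (ω : List B) (t : W) (ε : ℤˣ) :
    ((ω.map (sigma cs)).prod) (t, ε)
      = (π ω * t * (π ω)⁻¹, (-1) ^ ((ris ω).count t) * ε) := by
  induction ω generalizing t ε with
  | nil => simp
  | cons i ω ih =>
    rw [List.map_cons, List.prod_cons, Equiv.Perm.mul_apply, ih, sigma_apply]
    have hris : ris (i :: ω) = ((π ω)⁻¹ * s i * π ω) :: ris ω := rfl
    rw [hris, List.count_cons]
    have hcond : (π ω * t * (π ω)⁻¹ = s i) ↔ (t = (π ω)⁻¹ * s i * π ω) := by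
      constructor
      · intro h; rw [← h]; group
      · intro h; rw [h]; group
    rw [Prod.mk.injEq]
    refine ⟨by simp [wordProd_cons, mul_assoc, cs.inv_simple], ?_⟩
    simp only [beq_iff_eq]
    by_cases hc : t = (π ω)⁻¹ * s i * π ω
    · rw [if_pos (hcond.mpr hc), if_pos hc.symm, pow_add, pow_one]
      rw [mul_left_comm, mul_assoc]
    · rw [if_neg (fun h => hc (hcond.mp h)), if_neg (fun h => hc h.symm)]
      simp

theorem head_ris_alternating (i i' : B) (p : ℕ) :
    (π (alternatingWord i i' p))⁻¹ * π (alternatingWord i i' (p + 1))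
      = (s i' * s i) ^ p * s i' := by
  have hsemi : ∀ r : ℕ, s i' * (s i * s i') ^ r = (s i' * s i) ^ r * s i' := by
    intro r
    exact (SemiconjBy.pow_right (by unfold SemiconjBy; group) r).eq
  have hinv : ∀ r : ℕ, ((s i * s i') ^ r)⁻¹ = (s i' * s i) ^ r := by
    intro r
    rw [← inv_pow, mul_inv_rev, cs.inv_simple, cs.inv_simple]
  rw [cs.prod_alternatingWord_eq_mul_pow, cs.prod_alternatingWord_eq_mul_pow]
  rcases Nat.even_or_odd p with he | ho
  · obtain ⟨r, rfl⟩ := he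
    have h1 : ¬ Even (r + r + 1) := by simp [Nat.even_add_one, Nat.even_add]
    have h2 : (r + r) / 2 = r := by omega
    have h3 : (r + r + 1) / 2 = r := by omega
    rw [if_pos (by exact ⟨r, rfl⟩), if_neg h1, h2, h3, one_mul]
    rw [hinv r, hsemi r, ← mul_assoc, ← pow_add]
  · obtain ⟨r, rfl⟩ := ho
    have h1 : ¬ Even (2 * r + 1) := by simp [Nat.even_add_one, Nat.even_mul]
    have h2 : Even (2 * r + 1 + 1) := by refine ⟨r + 1, by omega⟩
    have h3 : (2 * r + 1) / 2 = r := by omega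
    have h4 : (2 * r + 1 + 1) / 2 = r + 1 := by omega
    rw [if_neg h1, if_pos h2, h3, h4, one_mul, mul_inv_rev, hinv r, cs.inv_simple]
    rw [mul_assoc, hsemi (r + 1), ← mul_assoc, ← pow_add]
    have hr : r + (r + 1) = 2 * r + 1 := by omega
    rw [hr]

theorem ris_alternating (i i' : B) (p : ℕ) :
    ris (alternatingWord i i' p)
      = ((List.range p).reverse).map (fun k => (s i' * s i) ^ k * s i') := by
  induction p with
  | zero => rfl
  | succ p ih =>
    rw [alternatingWord_succ' i i' p]
    have : ris ((if Even p then i' else i) :: alternatingWord i i' p)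
        = ((π (alternatingWord i i' p))⁻¹ * s (if Even p then i' else i)
            * π (alternatingWord i i' p)) :: ris (alternatingWord i i' p) := rfl
    rw [this, ih]
    have hh : (π (alternatingWord i i' p))⁻¹ * s (if Even p then i' else i)
        * π (alternatingWord i i' p) = (s i' * s i) ^ p * s i' := by
      have := head_ris_alternating cs i i' p
      rw [alternatingWord_succ' i i' p, wordProd_cons, ← mul_assoc] at this
      exact this
    rw [hh, List.range_succ, List.reverse_append]
    simp

theorem sigma_braid (i i' : B) : (sigma cs i * sigma cs i') ^ M i i' = 1 := by
  have key : ∀ m : ℕ, (sigma cs i * sigma cs i') ^ m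
      = ((alternatingWord i i' (2 * m)).map (sigma cs)).prod := by
    intro m
    induction m with
    | zero => rfl
    | succ m ih =>
      have h2 : 2 * (m + 1) = (2 * m + 1) + 1 := by ring
      rw [h2, alternatingWord_succ' i i' (2 * m + 1), alternatingWord_succ' i i' (2 * m)]
      have hodd : ¬ Even (2 * m + 1) := by simp [Nat.even_add_one, Nat.even_mul]
      have heven : Even (2 * m) := ⟨m, by ring⟩
      rw [if_neg hodd, if_pos heven, List.map_cons, List.map_cons, List.prod_cons,
        List.prod_cons, ← ih, pow_succ']
      rw [mul_assoc]
  rw [key (M i i')]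
  have hprod : π (alternatingWord i i' (2 * M i i')) = 1 := by
    rw [cs.prod_alternatingWord_eq_mul_pow]
    rw [if_pos ⟨M i i', by ring⟩, one_mul]
    have : 2 * M i i' / 2 = M i i' := by omega
    rw [this, cs.simple_mul_simple_pow]
  apply Equiv.ext
  rintro ⟨t, ε⟩
  have heven : Even (((ris (alternatingWord i i' (2 * M i i'))).count t)) := by
    rw [ris_alternating, List.map_reverse, List.count_reverse]
    have hsplit : List.map (fun k => (s i' * s i) ^ k * s i') (List.range (2 * M i i'))
        = List.map (fun k => (s i' * s i) ^ k * s i') (List.range (M i i'))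
          ++ List.map (fun k => (s i' * s i) ^ k * s i') (List.range (M i i')) := by
      rw [two_mul, List.range_add, List.map_append, List.map_map]
      congr 1
      apply List.map_congr_left
      intro k _
      simp only [Function.comp_apply]
      rw [pow_add, cs.simple_mul_simple_pow', one_mul]
    rw [hsplit, List.count_append]
    exact ⟨_, rfl⟩
  rw [prod_map_sigma_apply, hprod, Even.neg_one_pow heven]
  simp

/-- The sign representation `W →* Perm (W × ℤˣ)`. -/
def Phi : W →* Equiv.Perm (W × ℤˣ) :=
  cs.lift ⟨sigma cs, fun i i' => sigma_braid cs i i'⟩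

theorem Phi_simple (i : B) : Phi cs (s i) = sigma cs i :=
  cs.lift_apply_simple _ i

theorem Phi_wordProd (ω : List B) : Phi cs (π ω) = (ω.map (sigma cs)).prod := by
  induction ω with
  | nil => simp [wordProd_nil]
  | cons i ω ih => rw [wordProd_cons, map_mul, Phi_simple, List.map_cons, List.prod_cons, ih]

/-- The sign of `t` in `w`. -/
def nsign (w t : W) : ℤˣ := ((Phi cs w) (t, 1)).2

theorem nsign_wordProd (ω : List B) (t : W) :
    nsign cs (π ω) t = (-1) ^ ((ris ω).count t) := by
  rw [nsign, Phi_wordProd, prod_map_sigma_apply, mul_one]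

theorem Phi_apply (w t : W) (ε : ℤˣ) :
    (Phi cs w) (t, ε) = (w * t * w⁻¹, nsign cs w t * ε) := by
  obtain ⟨ω, rfl⟩ := cs.wordProd_surjective w
  rw [Phi_wordProd, prod_map_sigma_apply, nsign_wordProd]

theorem nsign_cocycle (u v t : W) :
    nsign cs (u * v) t = nsign cs v t * nsign cs u (v * t * v⁻¹) := by
  have h : (Phi cs (u * v)) (t, 1) = (Phi cs u) ((Phi cs v) (t, 1)) := by
    rw [map_mul]; rfl
  rw [nsign, h, Phi_apply, Phi_apply]
  simp [mul_comm]

theorem nsign_one (t : W) : nsign cs 1 t = 1 := by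
  rw [nsign, map_one]; rfl

theorem nsign_simple (i : B) (t : W) :
    nsign cs (s i) t = if t = s i then -1 else 1 := by
  rw [nsign, Phi_simple, sigma_apply, mul_one]

theorem units_self_mul (x : ℤˣ) : x * x = 1 := by
  rcases Int.units_eq_one_or x with rfl | rfl <;> decide

theorem eq_of_units_mul_eq_one {x y : ℤˣ} (h : x * y = 1) : x = y := by
  rcases Int.units_eq_one_or x with rfl | rfl <;> rcases Int.units_eq_one_or y with rfl | rfl <;>
    first | rfl | (exfalso; exact absurd h (by decide))

theorem nsign_inv (v t : W) : nsign cs v⁻¹ t = nsign cs v (v⁻¹ * t * v) := by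
  have h := nsign_cocycle cs v v⁻¹ t
  rw [mul_inv_cancel, nsign_one] at h
  have h2 : v⁻¹ * t * v⁻¹⁻¹ = v⁻¹ * t * v := by group
  rw [h2] at h
  exact eq_of_units_mul_eq_one h.symm

theorem nsign_refl {t : W} (ht : cs.IsReflection t) : nsign cs t t = -1 := by
  obtain ⟨v, i, rfl⟩ := ht
  set t := v * s i * v⁻¹ with hts
  have key : v⁻¹ * t * v = s i := by rw [hts]; group
  have h1 : nsign cs t t = nsign cs (v * (s i * v⁻¹)) t := by rw [hts, mul_assoc]
  have h2 : nsign cs (v * (s i * v⁻¹)) t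
      = nsign cs (s i * v⁻¹) t * nsign cs v ((s i * v⁻¹) * t * (s i * v⁻¹)⁻¹) := by
    exact nsign_cocycle cs v (s i * v⁻¹) t
  have h3 : (s i * v⁻¹) * t * (s i * v⁻¹)⁻¹ = s i * (v⁻¹ * t * v) * s i := by
    rw [mul_inv_rev, cs.inv_simple]; group
  have h4 : s i * (v⁻¹ * t * v) * s i = s i := by
    rw [key, mul_assoc, cs.simple_mul_simple_self, mul_one]
  have h5 : nsign cs (s i * v⁻¹) t = nsign cs v⁻¹ t * nsign cs (s i) (v⁻¹ * t * v⁻¹⁻¹) :=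
    nsign_cocycle cs (s i) v⁻¹ t
  have h6 : v⁻¹ * t * v⁻¹⁻¹ = v⁻¹ * t * v := by group
  rw [h1, h2, h3, h4, h5, h6, key, nsign_simple, if_pos rfl, nsign_inv, key]
  have h7 : nsign cs v (s i) * -1 * nsign cs v (s i)
      = -1 * (nsign cs v (s i) * nsign cs v (s i)) := by
    rw [mul_comm _ (-1 : ℤˣ), mul_assoc]
  rw [h7, units_self_mul, mul_one]

theorem nsign_neg_iff' : ∀ n (w t : W), ℓ w = n → cs.IsReflection t →
    (nsign cs w t = -1 ↔ ℓ (w * t) < ℓ w) := by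
  intro n
  induction n using Nat.strong_induction_on with
  | _ n ih =>
    intro w t hn ht
    rcases eq_or_ne w 1 with rfl | hw
    · rw [nsign_one, cs.length_one]
      constructor
      · intro h; exact absurd h (by decide)
      · omega
    · obtain ⟨i, hi⟩ := cs.exists_leftDescent_of_ne_one hw
      set u := s i * w with hu
      have hwu : w = s i * u := by rw [hu, cs.simple_mul_simple_cancel_left]
      have hlu : ℓ u + 1 = ℓ w := cs.isLeftDescent_iff.mp hi
      have hc : nsign cs w t = nsign cs u t * nsign cs (s i) (u * t * u⁻¹) := by
        conv_lhs => rw [hwu]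
        exact nsign_cocycle cs (s i) u t
      constructor
      · intro hneg
        by_cases hA : u * t * u⁻¹ = s i
        · have hut : u * t = w := by
            have h' : u * t = (u * t * u⁻¹) * u := by group
            rw [h', hA, ← hwu]
          have hwt : w * t = u := by
            rw [← hut, mul_assoc, ht.mul_self, mul_one]
          rw [hwt]; omega
        · have hns : nsign cs (s i) (u * t * u⁻¹) = 1 := by
            rw [nsign_simple, if_neg hA]
          have hnu : nsign cs u t = -1 := by
            rw [hc, hns, mul_one] at hneg; exact hneg
          have hlt : ℓ (u * t) < ℓ u :=
            (ih (ℓ u) (by omega) u t rfl ht).mp hnu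
          have h1 : ℓ (w * t) = ℓ (s i * (u * t)) := by rw [hwu, mul_assoc]
          have h2 : ℓ (s i * (u * t)) ≤ 1 + ℓ (u * t) := by
            have := cs.length_mul_le (s i) (u * t)
            rwa [cs.length_simple] at this
          omega
      · intro hlt
        set v := w * t with hv
        have hvt : v * t = w := by
          rw [hv, mul_assoc, ht.mul_self, mul_one]
        have hnv : nsign cs v t = 1 := by
          have hiff := ih (ℓ v) (by omega) v t rfl ht
          have hnot : ¬ ℓ (v * t) < ℓ v := by rw [hvt]; omega
          rcases Int.units_eq_one_or (nsign cs v t) with h | h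
          · exact h
          · exact absurd (hiff.mp h) hnot
        have hcc : nsign cs w t = nsign cs t t * nsign cs v (t * t * t⁻¹) := by
          conv_lhs => rw [← hvt]
          exact nsign_cocycle cs v t t
        have h3 : t * t * t⁻¹ = t := by
          rw [ht.mul_self, one_mul, ht.inv]
        rw [hcc, h3, hnv, nsign_refl cs ht, mul_one]

theorem nsign_neg_iff {w t : W} (ht : cs.IsReflection t) :
    nsign cs w t = -1 ↔ ℓ (w * t) < ℓ w :=
  nsign_neg_iff' cs (ℓ w) w t rfl ht

/-- Strong exchange property, in the form we need. -/
theorem exchange {ω : List B} (hred : cs.IsReduced ω) {t : W} (ht : cs.IsReflection t)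
    (hlt : ℓ (π ω * t) < ℓ (π ω)) :
    ∃ j < ω.length, π ω * t = π (ω.eraseIdx j) := by
  have hneg : nsign cs (π ω) t = -1 := (nsign_neg_iff cs ht).mpr hlt
  rw [nsign_wordProd] at hneg
  have hodd : (ris ω).count t ≠ 0 := by
    intro h
    rw [h] at hneg
    exact absurd hneg (by decide)
  have hmem : t ∈ ris ω := List.count_pos_iff.mp (Nat.pos_of_ne_zero hodd)
  obtain ⟨j, hj, hjt⟩ := List.mem_iff_getElem.mp hmem
  rw [cs.length_rightInvSeq] at hj
  refine ⟨j, hj, ?_⟩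
  have := cs.wordProd_mul_getD_rightInvSeq ω j
  rw [List.getD_eq_getElem _ 1 (by rw [cs.length_rightInvSeq]; exact hj), hjt] at this
  exact this

theorem wordProd_mem_closure {X : Set B} {ω : List B} (h : ∀ i ∈ ω, i ∈ X) :
    π ω ∈ Subgroup.closure (cs.simple '' X) := by
  induction ω with
  | nil => rw [wordProd_nil]; exact one_mem _
  | cons i ω ih =>
    rw [wordProd_cons]
    exact mul_mem (Subgroup.subset_closure ⟨i, h i (by simp), rfl⟩)
      (ih (fun j hj => h j (by simp [hj])))

theorem exists_word_of_mem_closure {X : Set B} {u : W}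
    (h : u ∈ Subgroup.closure (cs.simple '' X)) :
    ∃ ω : List B, (∀ i ∈ ω, i ∈ X) ∧ π ω = u := by
  induction h using Subgroup.closure_induction with
  | mem x hx =>
    obtain ⟨i, hi, rfl⟩ := hx
    exact ⟨[i], by simpa using hi, by simp⟩
  | one => exact ⟨[], by simp, by simp⟩
  | mul x y hx hy ihx ihy =>
    obtain ⟨ω₁, h₁, rfl⟩ := ihx
    obtain ⟨ω₂, h₂, rfl⟩ := ihy
    refine ⟨ω₁ ++ ω₂, ?_, by rw [wordProd_append]⟩
    intro i hi
    rcases List.mem_append.mp hi with h | h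
    · exact h₁ i h
    · exact h₂ i h
  | inv x hx ihx =>
    obtain ⟨ω, h₁, rfl⟩ := ihx
    exact ⟨ω.reverse, fun i hi => h₁ i (List.mem_reverse.mp hi), by rw [wordProd_reverse]⟩

theorem reduce_word : ∀ n (ω : List B), ω.length = n →
    ∃ ω' : List B, (∀ i ∈ ω', i ∈ ω) ∧ cs.IsReduced ω' ∧ π ω' = π ω := by
  intro n
  induction n using Nat.strong_induction_on with
  | _ n ih =>
    intro ω hn
    by_cases hred : cs.IsReduced ω
    · exact ⟨ω, fun i hi => hi, hred, rfl⟩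
    · have hex : ∃ p, ¬ cs.IsReduced (ω.take p) := ⟨ω.length, by rwa [List.take_length]⟩
      classical
      obtain ⟨p, hnotred, hmin⟩ : ∃ p, ¬ cs.IsReduced (ω.take p) ∧
          ∀ q < p, cs.IsReduced (ω.take q) :=
        ⟨Nat.find hex, Nat.find_spec hex, fun q hq => by
          by_contra hq'
          exact absurd (Nat.find_le hq') (Nat.not_le.mpr hq)⟩
      have hp0 : p ≠ 0 := by
        intro h
        apply hnotred
        rw [h, List.take_zero]
        unfold CoxeterSystem.IsReduced
        simp
      obtain ⟨q, rfl⟩ : ∃ q, p = q + 1 := ⟨p - 1, by omega⟩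
      have hqred : cs.IsReduced (ω.take q) := hmin q (by omega)
      have hqlt : q < ω.length := by
        by_contra hq'
        push_neg at hq'
        apply hnotred
        rw [List.take_of_length_le (by omega)]
        rwa [List.take_of_length_le hq'] at hqred
      set x := ω.get ⟨q, hqlt⟩ with hx
      have htake : ω.take (q + 1) = ω.take q ++ [x] := by
        rw [← List.take_concat_get, List.concat_eq_append, hx]
        rfl
      set y := π (ω.take q) with hy
      have hly : ℓ y = q := by
        have h' : ℓ (π (ω.take q)) = (ω.take q).length := hqred
        rw [hy, h', List.length_take, min_eq_left (by omega)]
      have hlyx : ℓ (y * s x) < ℓ y := by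
        rcases cs.length_mul_simple y x with h | h
        · exfalso
          apply hnotred
          have hlen1 : (ω.take (q + 1)).length = q + 1 := by
            rw [List.length_take]; omega
          unfold CoxeterSystem.IsReduced
          rw [hlen1, htake, wordProd_append, wordProd_singleton, ← hy, h, hly]
        · omega
      obtain ⟨k, hk, hkeq⟩ := exchange cs hqred (cs.isReflection_simple x) hlyx
      set ω'' := (ω.take q).eraseIdx k ++ ω.drop (q + 1) with hω''
      have hπ : π ω'' = π ω := by
        rw [hω'', wordProd_append, ← hkeq, ← hy, mul_assoc]
        rw [← wordProd_singleton, ← wordProd_append, ← wordProd_append]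
        rw [← List.append_assoc, ← htake, List.take_append_drop]
      have hlen : ω''.length < n := by
        have h1 : (ω.take q).length = q := by rw [List.length_take]; omega
        have h2 : ((ω.take q).eraseIdx k).length + 1 = (ω.take q).length :=
          List.length_eraseIdx_add_one hk
        have h3 : (ω.drop (q + 1)).length = ω.length - (q + 1) := List.length_drop
        rw [hω'', List.length_append]
        omega
      obtain ⟨ω', hsub, hred', hπ'⟩ := ih ω''.length (by omega) ω'' rfl
      refine ⟨ω', ?_, hred', by rw [hπ', hπ]⟩
      intro i hi
      rcases List.mem_append.mp (hsub i hi) with h | h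
      · exact (List.take_sublist q ω).subset ((List.eraseIdx_sublist _ k).subset h)
      · exact (List.drop_sublist (q + 1) ω).subset h

theorem exists_reduced_word_subset {X : Set B} {u : W}
    (h : u ∈ Subgroup.closure (cs.simple '' X)) :
    ∃ ω : List B, (∀ i ∈ ω, i ∈ X) ∧ cs.IsReduced ω ∧ π ω = u := by
  obtain ⟨ω, hω, rfl⟩ := exists_word_of_mem_closure cs h
  obtain ⟨ω', hsub, hred, hπ⟩ := reduce_word cs ω.length ω rfl
  exact ⟨ω', fun i hi => hω i (hsub i hi), hred, hπ⟩

theorem exists_right_descent_in_parabolic {X : Set B} {v : W}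
    (hv : v ∈ Subgroup.closure (cs.simple '' X)) (hv1 : v ≠ 1) :
    ∃ i ∈ X, ℓ (v * s i) < ℓ v ∧ v * s i ∈ Subgroup.closure (cs.simple '' X) := by
  obtain ⟨ω, hsub, hred, hπ⟩ := exists_reduced_word_subset cs hv
  rcases List.eq_nil_or_concat ω with rfl | ⟨ω₀, i, rfl⟩
  · exact absurd (by rw [← hπ, wordProd_nil]) hv1
  · refine ⟨i, hsub i (by simp), ?_, ?_⟩
    · have h1 : v * s i = π ω₀ := by
        rw [← hπ, List.concat_eq_append, wordProd_append, wordProd_singleton,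
          cs.simple_mul_simple_cancel_right]
      have h2 : ℓ v = ω₀.length + 1 := by
        rw [← hπ]
        have := hred
        unfold CoxeterSystem.IsReduced at this
        rw [this, List.concat_eq_append, List.length_append]
        simp
      rw [h1]
      have := cs.length_wordProd_le ω₀
      omega
    · have h1 : v * s i = π ω₀ := by
        rw [← hπ, List.concat_eq_append, wordProd_append, wordProd_singleton,
          cs.simple_mul_simple_cancel_right]
      rw [h1]
      exact wordProd_mem_closure cs (fun j hj => hsub j (by simp [List.concat_eq_append, hj]))

theorem keyclaim_aux {X : Set B} {β : W}
    (hmin : ∀ d ∈ Subgroup.closure (cs.simple '' X), ℓ β ≤ ℓ (β * d)) :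
    ∀ n (ω : List B), ω.length = n → (∀ i ∈ ω, i ∈ X) → cs.IsReduced ω →
      ℓ (β * π ω) = ℓ β + ω.length := by
  intro n
  induction n with
  | zero =>
    intro ω hn _ _
    rw [List.length_eq_zero_iff.mp hn]
    simp
  | succ n ihn =>
    intro ω hn hsub hred
    rcases List.eq_nil_or_concat ω with rfl | ⟨ω₀, i, rfl⟩
    · simp at hn
    · rw [List.concat_eq_append] at *
      have hlω₀ : ω₀.length = n := by
        rw [List.length_append] at hn; simpa using hn
      have hω₀red : cs.IsReduced ω₀ := by
        have := hred.take ω₀.length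
        rwa [List.take_left] at this
      have hIH : ℓ (β * π ω₀) = ℓ β + n := by
        rw [← hlω₀]
        exact ihn ω₀ hlω₀ (fun j hj => hsub j (by simp [hj])) hω₀red
      have hstep : ℓ (β * π ω₀ * s i) = ℓ (β * π ω₀) + 1 := by
        rcases cs.length_mul_simple (β * π ω₀) i with h | h
        · exact h
        · -- contradiction via exchange
          exfalso
          obtain ⟨ωβ, hlβ, hβeq⟩ := cs.exists_reduced_word β
          have hπζ : π (ωβ ++ ω₀) = β * π ω₀ := by rw [wordProd_append, ← hβeq]
          have hζred : cs.IsReduced (ωβ ++ ω₀) := by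
            unfold CoxeterSystem.IsReduced
            rw [hπζ, List.length_append, hIH, hβeq, hlβ, hlω₀]
          have hlt : ℓ (π (ωβ ++ ω₀) * s i) < ℓ (π (ωβ ++ ω₀)) := by
            rw [hπζ]; omega
          obtain ⟨k, hk, hkeq⟩ := exchange cs hζred (cs.isReflection_simple i) hlt
          rw [hπζ] at hkeq
          rcases Nat.lt_or_ge k ωβ.length with hkβ | hkβ
          · -- erased in β part : contradicts minimality
            rw [List.eraseIdx_append_of_lt_length hkβ, wordProd_append] at hkeq
            set d := π ω₀ * s i * (π ω₀)⁻¹ with hd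
            have hdmem : d ∈ Subgroup.closure (cs.simple '' X) := by
              refine mul_mem (mul_mem ?_ ?_) ?_
              · exact wordProd_mem_closure cs (fun j hj => hsub j (by simp [hj]))
              · exact Subgroup.subset_closure ⟨i, hsub i (by simp), rfl⟩
              · exact inv_mem (wordProd_mem_closure cs (fun j hj => hsub j (by simp [hj])))
            have hβd : β * d = π (ωβ.eraseIdx k) := by
              have h' : β * d * π ω₀ = π (ωβ.eraseIdx k) * π ω₀ := by
                rw [← hkeq, hd]
                group
              exact mul_right_cancel h'
            have hlen1 : (ωβ.eraseIdx k).length + 1 = ωβ.length :=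
              List.length_eraseIdx_add_one hkβ
            have : ℓ (β * d) < ℓ β := by
              rw [hβd]
              have := cs.length_wordProd_le (ωβ.eraseIdx k)
              have hlβ2 : ℓ β = ωβ.length := by rw [hβeq]; exact hlβ
              omega
            exact absurd (hmin d hdmem) (by omega)
          · -- erased in ω₀ part : contradicts reducedness of ω
            have hkl : k - ωβ.length < ω₀.length := by
              rw [List.length_append] at hk
              omega
            rw [List.eraseIdx_append_of_length_le hkβ, wordProd_append, ← hβeq] at hkeq
            have hcancel : π ω₀ * s i = π (ω₀.eraseIdx (k - ωβ.length)) := by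
              rw [mul_assoc] at hkeq
              exact mul_left_cancel hkeq
            have hωprod : π (ω₀ ++ [i]) = π (ω₀.eraseIdx (k - ωβ.length)) := by
              rw [wordProd_append, wordProd_singleton, hcancel]
            have hlen2 : (ω₀.eraseIdx (k - ωβ.length)).length + 1 = ω₀.length :=
              List.length_eraseIdx_add_one hkl
            have hredlen : ℓ (π (ω₀ ++ [i])) = n + 1 := by
              have h0 : ℓ (π (ω₀ ++ [i])) = (ω₀ ++ [i]).length := hred
              rw [h0, List.length_append, hlω₀]
              simp
            have := cs.length_wordProd_le (ω₀.eraseIdx (k - ωβ.length))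
            rw [hωprod] at hredlen
            omega
      rw [wordProd_append, wordProd_singleton, ← mul_assoc, hstep, hIH,
        List.length_append, hlω₀]
      simp
      omega

theorem keyclaim {X : Set B} {β : W}
    (hmin : ∀ d ∈ Subgroup.closure (cs.simple '' X), ℓ β ≤ ℓ (β * d)) :
    ∀ v ∈ Subgroup.closure (cs.simple '' X), ℓ (β * v) = ℓ β + ℓ v := by
  intro v hv
  obtain ⟨ω, hsub, hred, hπ⟩ := exists_reduced_word_subset cs hv
  have hlv : ℓ v = ω.length := by rw [← hπ]; exact hred
  rw [← hπ, keyclaim_aux cs hmin ω.length ω rfl hsub hred]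
  rw [hπ, hlv]

section FintypeW

variable [Fintype W]

theorem coset_decomp (X : Set B) (u : W) :
    ∃ β v : W, u = β * v ∧ v ∈ Subgroup.closure (cs.simple '' X) ∧
      ∀ v' ∈ Subgroup.closure (cs.simple '' X), ℓ (β * v') = ℓ β + ℓ v' := by
  classical
  set G := Subgroup.closure (cs.simple '' X) with hG
  obtain ⟨d₀, hd₀mem, hd₀min⟩ := Finset.exists_min_image
    (Finset.univ.filter (fun d => d ∈ G)) (fun d => ℓ (u * d))
    ⟨1, by simp [one_mem]⟩
  rw [Finset.mem_filter] at hd₀mem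
  refine ⟨u * d₀, d₀⁻¹, by group, inv_mem hd₀mem.2, ?_⟩
  apply keyclaim
  intro d hd
  have : ℓ (u * d₀) ≤ ℓ (u * (d₀ * d)) := by
    have := hd₀min (d₀ * d) (Finset.mem_filter.mpr ⟨Finset.mem_univ _, mul_mem hd₀mem.2 hd⟩)
    simpa using this
  rwa [← mul_assoc] at this

theorem minrep_strong {X : Set B} {β : W}
    (hβ : ∀ i ∈ X, ℓ β < ℓ (β * s i)) :
    ∀ v ∈ Subgroup.closure (cs.simple '' X), ℓ (β * v) = ℓ β + ℓ v := by
  obtain ⟨β₀, v₀, heq, hv₀, hstrong⟩ := coset_decomp cs X β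
  rcases eq_or_ne v₀ 1 with rfl | hne
  · rw [mul_one] at heq
    rw [heq]
    exact hstrong
  · exfalso
    obtain ⟨i, hiX, hdesc, hmem⟩ := exists_right_descent_in_parabolic cs hv₀ hne
    have h1 : ℓ (β * s i) = ℓ β₀ + ℓ (v₀ * s i) := by
      rw [heq, mul_assoc]
      exact hstrong _ hmem
    have h2 : ℓ β = ℓ β₀ + ℓ v₀ := by rw [heq]; exact hstrong _ hv₀
    have := hβ i hiX
    omega

theorem decomp_unique {X : Set B} {β₁ β₂ v₁ v₂ : W}
    (h : β₁ * v₁ = β₂ * v₂)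
    (hv₁ : v₁ ∈ Subgroup.closure (cs.simple '' X))
    (hv₂ : v₂ ∈ Subgroup.closure (cs.simple '' X))
    (hβ₁ : ∀ i ∈ X, ℓ β₁ < ℓ (β₁ * s i))
    (hβ₂ : ∀ i ∈ X, ℓ β₂ < ℓ (β₂ * s i)) :
    β₁ = β₂ ∧ v₁ = v₂ := by
  set d := v₂ * v₁⁻¹ with hd
  have hdmem : d ∈ Subgroup.closure (cs.simple '' X) := mul_mem hv₂ (inv_mem hv₁)
  have hβd : β₁ = β₂ * d := by
    rw [hd, ← mul_assoc]
    rw [← h]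
    group
  rcases eq_or_ne d 1 with hd1 | hne
  · rw [hd1, mul_one] at hβd
    refine ⟨hβd, ?_⟩
    have : v₂ * v₁⁻¹ = 1 := hd1
    have := congrArg (· * v₁) this
    simpa using this.symm
  · exfalso
    obtain ⟨i, hiX, hdesc, hmem⟩ := exists_right_descent_in_parabolic cs hdmem hne
    have h1 : ℓ (β₁ * s i) = ℓ β₂ + ℓ (d * s i) := by
      rw [hβd, mul_assoc]
      exact minrep_strong cs hβ₂ _ hmem
    have h2 : ℓ β₁ = ℓ β₂ + ℓ d := by rw [hβd]; exact minrep_strong cs hβ₂ _ hdmem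
    have := hβ₁ i hiX
    omega

end FintypeW

end Aux

variable {m : ℕ} {W : Type*} [Group W] [Fintype W] {M : CoxeterMatrix (Fin m)}

/-- The set `W_Γ^{Γ∖{s_j}}` of minimal left coset representatives of `W_{Γ∖{s_j}}`
in `W_Γ`. -/
def minReps (cs : CoxeterSystem M W) (Γ : Finset (Fin m)) (j : Fin m) : Finset W :=
  Finset.univ.filter (fun β =>
    β ∈ Subgroup.closure (cs.simple '' (Γ : Set (Fin m))) ∧
    ∀ i ∈ Γ.erase j, cs.length β < cs.length (β * cs.simple i))

/-- `μ(Γ, s_j) = #{s_i ∈ Γ : i ≤ j}`. -/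
def mu (Γ : Finset (Fin m)) (j : Fin m) : ℕ := (Γ.filter (fun i => i ≤ j)).card

/-- The Salvetti boundary operator, defined on a cell `E(w,Γ)` by
`∂(E(w,Γ)) = Σ_{s_j∈Γ} Σ_{β ∈ W_Γ^{Γ∖{s_j}}} (−1)^{ℓ(β)+μ(Γ,s_j)} E(wβ, Γ∖{s_j})`. -/
def bdry (cs : CoxeterSystem M W) :
    ((W × Finset (Fin m)) →₀ ℤ) →ₗ[ℤ] ((W × Finset (Fin m)) →₀ ℤ) :=
  Finsupp.lsum ℤ (fun p => LinearMap.toSpanSingleton ℤ _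
    (∑ j ∈ p.2, ∑ β ∈ minReps cs p.2 j,
      ((-1 : ℤ) ^ (cs.length β + mu p.2 j)) •
        Finsupp.single (p.1 * β, p.2.erase j) (1 : ℤ)))

/-- Second-order minimal coset representatives `W_Γ^{Γ∖{j,j'}}`. -/
def minReps2 (cs : CoxeterSystem M W) (Γ : Finset (Fin m)) (j j' : Fin m) : Finset W :=
  Finset.univ.filter (fun u =>
    u ∈ Subgroup.closure (cs.simple '' (Γ : Set (Fin m))) ∧
    ∀ i ∈ (Γ.erase j).erase j', cs.length u < cs.length (u * cs.simple i))

theorem mem_minReps (cs : CoxeterSystem M W) {Γ : Finset (Fin m)} {j : Fin m} {β : W} :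
    β ∈ minReps cs Γ j ↔ β ∈ Subgroup.closure (cs.simple '' (Γ : Set (Fin m))) ∧
      ∀ i ∈ Γ.erase j, cs.length β < cs.length (β * cs.simple i) := by
  unfold minReps
  simp

theorem mem_minReps2 (cs : CoxeterSystem M W) {Γ : Finset (Fin m)} {j j' : Fin m} {u : W} :
    u ∈ minReps2 cs Γ j j' ↔ u ∈ Subgroup.closure (cs.simple '' (Γ : Set (Fin m))) ∧
      ∀ i ∈ (Γ.erase j).erase j', cs.length u < cs.length (u * cs.simple i) := by
  unfold minReps2
  simp

theorem minReps2_symm (cs : CoxeterSystem M W) (Γ : Finset (Fin m)) (j j' : Fin m) :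
    minReps2 cs Γ j j' = minReps2 cs Γ j' j := by
  unfold minReps2
  simp only [Finset.erase_right_comm]

theorem closure_mono_erase (cs : CoxeterSystem M W) (Γ : Finset (Fin m)) (j : Fin m) :
    Subgroup.closure (cs.simple '' ((Γ.erase j : Finset (Fin m)) : Set (Fin m)))
      ≤ Subgroup.closure (cs.simple '' (Γ : Set (Fin m))) :=
  Subgroup.closure_mono (Set.image_mono (Finset.coe_subset.mpr (Finset.erase_subset _ _)))

theorem sum_collapse {α : Type*} [AddCommMonoid α] (cs : CoxeterSystem M W)
    {Γ : Finset (Fin m)} {j j' : Fin m} (f : W → ℕ → α) :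
    (∑ β ∈ minReps cs Γ j, ∑ β' ∈ minReps cs (Γ.erase j) j',
        f (β * β') (cs.length β + cs.length β'))
      = ∑ u ∈ minReps2 cs Γ j j', f u (cs.length u) := by
  rw [← Finset.sum_product (minReps cs Γ j) (minReps cs (Γ.erase j) j')
    (fun x => f (x.1 * x.2) (cs.length x.1 + cs.length x.2))]
  refine Finset.sum_bij (fun p _ => p.1 * p.2) ?_ ?_ ?_ ?_
  · -- maps to
    intro p hp
    rw [Finset.mem_product, mem_minReps, mem_minReps] at hp
    obtain ⟨⟨h1c, h1m⟩, ⟨h2c, h2m⟩⟩ := hp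
    have hstrong := minrep_strong cs (X := ((Γ.erase j : Finset (Fin m)) : Set (Fin m)))
      (β := p.1) (fun i hi => h1m i hi)
    rw [mem_minReps2]
    constructor
    · exact mul_mem h1c (closure_mono_erase cs Γ j h2c)
    · intro i hi
      have hiΔ : i ∈ Γ.erase j := Finset.erase_subset _ _ hi
      have hmem : p.2 * cs.simple i
          ∈ Subgroup.closure (cs.simple '' ((Γ.erase j : Finset (Fin m)) : Set (Fin m))) :=
        mul_mem h2c (Subgroup.subset_closure ⟨i, Finset.mem_coe.mpr hiΔ, rfl⟩)
      have e1 : cs.length (p.1 * p.2 * cs.simple i)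
          = cs.length p.1 + cs.length (p.2 * cs.simple i) := by
        rw [mul_assoc]
        exact hstrong _ hmem
      have e2 : cs.length (p.1 * p.2) = cs.length p.1 + cs.length p.2 := hstrong _ h2c
      have := h2m i hi
      omega
  · -- injective
    intro p hp q hq heq
    rw [Finset.mem_product, mem_minReps, mem_minReps] at hp hq
    obtain ⟨⟨h1c, h1m⟩, ⟨h2c, h2m⟩⟩ := hp
    obtain ⟨⟨g1c, g1m⟩, ⟨g2c, g2m⟩⟩ := hq
    have := decomp_unique cs (X := ((Γ.erase j : Finset (Fin m)) : Set (Fin m))) heq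
      h2c g2c (fun i hi => h1m i hi) (fun i hi => g1m i hi)
    exact Prod.ext this.1 this.2
  · -- surjective
    intro u hu
    rw [mem_minReps2] at hu
    obtain ⟨huc, hum⟩ := hu
    obtain ⟨β, v, heq, hv, hstrong⟩ :=
      coset_decomp cs (((Γ.erase j : Finset (Fin m)) : Set (Fin m))) u
    have hβmin : ∀ i ∈ Γ.erase j, cs.length β < cs.length (β * cs.simple i) := by
      intro i hi
      have := hstrong (cs.simple i) (Subgroup.subset_closure ⟨i, Finset.mem_coe.mpr hi, rfl⟩)
      rw [cs.length_simple] at this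
      omega
    refine ⟨(β, v), ?_, heq.symm⟩
    rw [Finset.mem_product]
    dsimp only
    rw [mem_minReps, mem_minReps]
    refine ⟨⟨?_, hβmin⟩, hv, ?_⟩
    · have hβu : β = u * v⁻¹ := by rw [heq]; group
      rw [hβu]
      exact mul_mem huc (inv_mem (closure_mono_erase cs Γ j hv))
    · intro i hi
      have hiΔ : i ∈ Γ.erase j := Finset.erase_subset _ _ hi
      have hmem : v * cs.simple i
          ∈ Subgroup.closure (cs.simple '' ((Γ.erase j : Finset (Fin m)) : Set (Fin m))) :=
        mul_mem hv (Subgroup.subset_closure ⟨i, Finset.mem_coe.mpr hiΔ, rfl⟩)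
      have e1 : cs.length (u * cs.simple i) = cs.length β + cs.length (v * cs.simple i) := by
        rw [heq, mul_assoc]
        exact hstrong _ hmem
      have e2 : cs.length u = cs.length β + cs.length v := by
        rw [heq]
        exact hstrong _ hv
      have := hum i hi
      omega
  · -- values
    intro p hp
    rw [Finset.mem_product, mem_minReps, mem_minReps] at hp
    obtain ⟨⟨h1c, h1m⟩, ⟨h2c, h2m⟩⟩ := hp
    have hstrong := minrep_strong cs (X := ((Γ.erase j : Finset (Fin m)) : Set (Fin m)))
      (β := p.1) (fun i hi => h1m i hi)
    rw [hstrong _ h2c]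

theorem mu_erase_of_le {Γ : Finset (Fin m)} {x y : Fin m} (hx : x ∈ Γ) (hxy : x ≤ y) :
    mu (Γ.erase x) y + 1 = mu Γ y := by
  unfold mu
  have hmemf : x ∈ Γ.filter (fun i => i ≤ y) := Finset.mem_filter.mpr ⟨hx, hxy⟩
  rw [Finset.filter_erase, Finset.card_erase_of_mem hmemf]
  have : 1 ≤ (Γ.filter (fun i => i ≤ y)).card := Finset.card_pos.mpr ⟨x, hmemf⟩
  omega

theorem mu_erase_of_not_le {Γ : Finset (Fin m)} {x y : Fin m} (h : ¬ x ≤ y) :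
    mu (Γ.erase x) y = mu Γ y := by
  unfold mu
  have hnm : x ∉ Γ.filter (fun i => i ≤ y) := fun hc => h (Finset.mem_filter.mp hc).2
  rw [Finset.filter_erase, Finset.erase_eq_of_notMem hnm]

theorem mu_odd {Γ : Finset (Fin m)} {j j' : Fin m} (hj : j ∈ Γ) (hj' : j' ∈ Γ) (hne : j ≠ j') :
    Odd (mu Γ j + mu (Γ.erase j) j' + (mu Γ j' + mu (Γ.erase j') j)) := by
  rcases le_or_gt j j' with h | h
  · have h2 : ¬ j' ≤ j := fun hc => hne (le_antisymm h hc)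
    have e1 := mu_erase_of_le hj h
    have e2 := mu_erase_of_not_le (Γ := Γ) h2
    rw [Nat.odd_iff]
    omega
  · have h1 : ¬ j ≤ j' := not_le_of_gt h
    have e1 := mu_erase_of_le hj' (le_of_lt h)
    have e2 := mu_erase_of_not_le (Γ := Γ) h1
    rw [Nat.odd_iff]
    omega

theorem neg_one_pow_add_eq_zero {x y : ℕ} (h : Odd (x + y)) :
    ((-1 : ℤ) ^ x + (-1) ^ y) = 0 := by
  rcases Nat.even_or_odd x with hx | hx
  · have hy : Odd y := by
      rw [Nat.odd_iff] at *
      rw [Nat.even_iff] at hx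
      omega
    rw [Even.neg_one_pow hx, Odd.neg_one_pow hy]
    ring
  · have hy : Even y := by
      rw [Nat.odd_iff] at *
      rw [Nat.even_iff]
      omega
    rw [Odd.neg_one_pow hx, Even.neg_one_pow hy]
    ring

theorem bdry_single (cs : CoxeterSystem M W) (p : W × Finset (Fin m)) :
    bdry cs (Finsupp.single p 1) =
      ∑ j ∈ p.2, ∑ β ∈ minReps cs p.2 j,
        ((-1 : ℤ) ^ (cs.length β + mu p.2 j)) •
          Finsupp.single (p.1 * β, p.2.erase j) (1 : ℤ) := by
  unfold bdry
  rw [Finsupp.lsum_single, LinearMap.toSpanSingleton_apply_one]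

/-- The Salvetti boundary operator squares to zero: `∂ ∘ ∂ = 0`. -/
theorem bdry_comp_bdry (cs : CoxeterSystem M W) : bdry cs ∘ₗ bdry cs = 0 := by
  apply Finsupp.lhom_ext
  intro p c
  have hc : (Finsupp.single p c : (W × Finset (Fin m)) →₀ ℤ) = c • Finsupp.single p 1 := by
    rw [Finsupp.smul_single, smul_eq_mul, mul_one]
  rw [LinearMap.comp_apply, hc, map_smul, map_smul, LinearMap.zero_apply]
  suffices h : (bdry cs) ((bdry cs) (Finsupp.single p 1)) = 0 by rw [h, smul_zero]
  rw [bdry_single, map_sum]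
  have step : ∀ j ∈ p.2,
      (bdry cs) (∑ β ∈ minReps cs p.2 j,
          ((-1 : ℤ) ^ (cs.length β + mu p.2 j)) •
            Finsupp.single (p.1 * β, p.2.erase j) (1 : ℤ))
      = ∑ j' ∈ p.2.erase j, ∑ u ∈ minReps2 cs p.2 j j',
          ((-1 : ℤ) ^ (cs.length u + (mu p.2 j + mu (p.2.erase j) j'))) •
            Finsupp.single (p.1 * u, (p.2.erase j).erase j') (1 : ℤ) := by
    intro j hj
    rw [map_sum]
    have inner : ∀ β, (bdry cs) (((-1 : ℤ) ^ (cs.length β + mu p.2 j)) •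
          Finsupp.single (p.1 * β, p.2.erase j) (1 : ℤ))
        = ∑ j' ∈ p.2.erase j, ∑ β' ∈ minReps cs (p.2.erase j) j',
            ((-1 : ℤ) ^ ((cs.length β + cs.length β') + (mu p.2 j + mu (p.2.erase j) j'))) •
              Finsupp.single ((p.1 * β) * β', (p.2.erase j).erase j') (1 : ℤ) := by
      intro β
      rw [map_smul, bdry_single, Finset.smul_sum]
      apply Finset.sum_congr rfl
      intro j' _
      rw [Finset.smul_sum]
      apply Finset.sum_congr rfl
      intro β' _
      rw [smul_smul, ← pow_add]
      have hexp : cs.length β + mu p.2 j + (cs.length β' + mu (p.2.erase j) j')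
          = (cs.length β + cs.length β') + (mu p.2 j + mu (p.2.erase j) j') := by ring
      rw [hexp]
    rw [Finset.sum_congr rfl (fun β _ => inner β), Finset.sum_comm]
    apply Finset.sum_congr rfl
    intro j' _
    have hcol := sum_collapse cs (Γ := p.2) (j := j) (j' := j')
      (f := fun u L => ((-1 : ℤ) ^ (L + (mu p.2 j + mu (p.2.erase j) j'))) •
        Finsupp.single (p.1 * u, (p.2.erase j).erase j') (1 : ℤ))
    rw [← hcol]
    apply Finset.sum_congr rfl
    intro β _
    apply Finset.sum_congr rfl
    intro β' _
    rw [mul_assoc]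
  rw [Finset.sum_congr rfl step, Finset.sum_sigma']
  apply Finset.sum_involution (fun a _ => ⟨a.2, a.1⟩)
  · intro a ha
    rw [Finset.mem_sigma] at ha
    obtain ⟨h1, h2⟩ := ha
    have hjΓ : a.2 ∈ p.2 := Finset.erase_subset _ _ h2
    have hne : a.2 ≠ a.1 := Finset.ne_of_mem_erase h2
    show (∑ u ∈ minReps2 cs p.2 a.1 a.2, _) + (∑ u ∈ minReps2 cs p.2 a.2 a.1, _) = 0
    rw [minReps2_symm cs p.2 a.2 a.1, ← Finset.sum_add_distrib]
    apply Finset.sum_eq_zero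
    intro u _
    rw [Finset.erase_right_comm (s := p.2) (a := a.2) (b := a.1), ← add_smul]
    have hodd : Odd ((cs.length u + (mu p.2 a.1 + mu (p.2.erase a.1) a.2))
        + (cs.length u + (mu p.2 a.2 + mu (p.2.erase a.2) a.1))) := by
      have := mu_odd (Γ := p.2) h1 hjΓ (fun hc => hne hc.symm)
      rw [Nat.odd_iff] at *
      omega
    rw [neg_one_pow_add_eq_zero hodd, zero_smul]
  · intro a ha _
    intro hgeq
    exact (Finset.ne_of_mem_erase (Finset.mem_sigma.mp ha).2) (congrArg Sigma.fst hgeq)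
  · intro a ha
    rfl
  · intro a ha
    rw [Finset.mem_sigma] at ha ⊢
    obtain ⟨h1, h2⟩ := ha
    exact ⟨Finset.erase_subset _ _ h2,
      Finset.mem_erase.mpr ⟨fun hc => Finset.ne_of_mem_erase h2 hc.symm, h1⟩⟩

end SalvettiStmt17
end
end
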